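/- Let (X, ≤) be a bi-directed partially ordered set with complete metric d, and A : X² → X mixed monotone with d(A(x,y), A(u,v)) ≤ φ(max{d(x,u), d(y,v)}) whenever x ≤ u and y ≥ v, for some nondecreasing φ : [0,∞) → [0,∞) with φⁿ(t) → 0 for all t ≥ 0. Assume A is continuous, and there exist x₀, y₀ with x₀ ≤ A(x₀, y₀) and y₀ ≥ A(y₀, x₀). Then there exists x* ∈ X such that (x*, x*) is the unique coupled fixed point of A (in particular, x* is the unique fixed point of A), and the s-composition iterates satisfy Aⁿ(x, y) → x* for all x, y ∈ X. -/
import Mathlib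

open Filter Topology

/-- Iterates of a bivariate self-map with respect to the symmetric composition:
`A⁰(x,y) = x`, `Aⁿ⁺¹(x,y) = A(Aⁿ(x,y), Aⁿ(y,x))`. -/
def siter {X : Type*} (A : X → X → X) : ℕ → X → X → X
  | 0 => fun x _ => x
  | n + 1 => fun x y => A (siter A n x y) (siter A n y x)

private lemma iter_nonneg (φ : ℝ → ℝ) (hφ_pos : ∀ t : ℝ, 0 ≤ t → 0 ≤ φ t) :
    ∀ (n : ℕ) (t : ℝ), 0 ≤ t → 0 ≤ φ^[n] t := by
  intro n
  induction n with
  | zero => intro t ht; simpa using ht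
  | succ n ih =>
    intro t ht
    rw [Function.iterate_succ_apply']
    exact hφ_pos _ (ih t ht)

private lemma siter_shift {X : Type*} (A : X → X → X) :
    ∀ (n : ℕ) (p q : X), siter A n (A p q) (A q p) = siter A (n + 1) p q := by
  intro n
  induction n with
  | zero => intro p q; rfl
  | succ n ih =>
    intro p q
    show A (siter A n (A p q) (A q p)) (siter A n (A q p) (A p q)) = _
    rw [ih, ih]
    rfl

private lemma siter_fixed {X : Type*} (A : X → X → X) (p q : X)
    (hp : A p q = p) (hq : A q p = q) : ∀ n, siter A n p q = p ∧ siter A n q p = q := by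
  intro n
  induction n with
  | zero => exact ⟨rfl, rfl⟩
  | succ n ih =>
    refine ⟨?_, ?_⟩
    · show A (siter A n p q) (siter A n q p) = p
      rw [ih.1, ih.2, hp]
    · show A (siter A n q p) (siter A n p q) = q
      rw [ih.1, ih.2, hq]

private lemma siter_key {X : Type*} [PartialOrder X] [MetricSpace X]
    (A : X → X → X)
    (hmm : ∀ x y u v : X, x ≤ u → v ≤ y → A x y ≤ A u v)
    (φ : ℝ → ℝ)
    (hφ_mono : ∀ s t : ℝ, 0 ≤ s → s ≤ t → φ s ≤ φ t)
    (hcontr : ∀ x y u v : X, x ≤ u → v ≤ y →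
      dist (A x y) (A u v) ≤ φ (max (dist x u) (dist y v)))
    (a b c d : X) (h1 : a ≤ c) (h2 : d ≤ b) :
    ∀ n, siter A n a b ≤ siter A n c d ∧ siter A n d c ≤ siter A n b a ∧
      max (dist (siter A n a b) (siter A n c d))
          (dist (siter A n b a) (siter A n d c)) ≤
        φ^[n] (max (dist a c) (dist b d)) := by
  intro n
  induction n with
  | zero => exact ⟨h1, h2, by simp [siter]⟩
  | succ n ih =>
    obtain ⟨o1, o2, hd⟩ := ih
    set M : ℝ := max (dist (siter A n a b) (siter A n c d))
        (dist (siter A n b a) (siter A n d c)) with hM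
    have hM0 : (0:ℝ) ≤ M := le_trans dist_nonneg (le_max_left _ _)
    refine ⟨hmm _ _ _ _ o1 o2, hmm _ _ _ _ o2 o1, ?_⟩
    rw [Function.iterate_succ_apply']
    have e1 : dist (siter A (n+1) a b) (siter A (n+1) c d) ≤ φ M :=
      hcontr _ _ _ _ o1 o2
    have e2 : dist (siter A (n+1) b a) (siter A (n+1) d c) ≤ φ M := by
      have h := hcontr (siter A n d c) (siter A n c d)
        (siter A n b a) (siter A n a b) o2 o1
      calc dist (siter A (n+1) b a) (siter A (n+1) d c)
          = dist (A (siter A n d c) (siter A n c d))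
              (A (siter A n b a) (siter A n a b)) := dist_comm _ _
        _ ≤ φ (max (dist (siter A n d c) (siter A n b a))
              (dist (siter A n c d) (siter A n a b))) := h
        _ = φ M := by rw [hM, dist_comm (siter A n d c), dist_comm (siter A n c d),
              max_comm]
    exact le_trans (max_le e1 e2) (hφ_mono M _ hM0 hd)

/-- Fixed point theorem for mixed monotone φ-contractions on a bi-directed partially
ordered complete metric space (Theorem 3.2 of the paper, continuity case). -/
theorem mixedMonotone_fixed_point
    {X : Type*} [PartialOrder X] [MetricSpace X] [CompleteSpace X]
    (hbi : ∀ a b : X, (∃ l, l ≤ a ∧ l ≤ b) ∧ (∃ u, a ≤ u ∧ b ≤ u))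
    (A : X → X → X)
    (hmm : ∀ x y u v : X, x ≤ u → v ≤ y → A x y ≤ A u v)
    (φ : ℝ → ℝ)
    (hφ_mono : ∀ s t : ℝ, 0 ≤ s → s ≤ t → φ s ≤ φ t)
    (hφ_pos : ∀ t : ℝ, 0 ≤ t → 0 ≤ φ t)
    (hφ_iter : ∀ t : ℝ, 0 ≤ t → Tendsto (fun n => φ^[n] t) atTop (𝓝 0))
    (hcontr : ∀ x y u v : X, x ≤ u → v ≤ y →
      dist (A x y) (A u v) ≤ φ (max (dist x u) (dist y v)))
    (hcont : Continuous fun p : X × X => A p.1 p.2)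
    (x₀ y₀ : X) (hx₀ : x₀ ≤ A x₀ y₀) (hy₀ : A y₀ x₀ ≤ y₀) :
    ∃ xs : X, A xs xs = xs ∧
      (∀ x y : X, A x y = x ∧ A y x = y → x = xs ∧ y = xs) ∧
      (∀ x y : X, Tendsto (fun n => siter A n x y) atTop (𝓝 xs)) := by
  -- φ facts
  have hφ_lt : ∀ t : ℝ, 0 < t → φ t < t := by
    intro t ht
    by_contra h
    push_neg at h
    have hle : ∀ n, t ≤ φ^[n] t := by
      intro n
      induction n with
      | zero => simp
      | succ n ih =>
        rw [Function.iterate_succ_apply']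
        exact le_trans h (hφ_mono t (φ^[n] t) ht.le ih)
    have := ge_of_tendsto (hφ_iter t ht.le) (Eventually.of_forall hle)
    linarith
  -- the Picard sequences
  set xseq : ℕ → X := fun n => siter A n x₀ y₀ with hxseq
  set yseq : ℕ → X := fun n => siter A n y₀ x₀ with hyseq
  have hstepx : ∀ n, xseq (n + 1) = A (xseq n) (yseq n) := fun n => rfl
  have hstepy : ∀ n, yseq (n + 1) = A (yseq n) (xseq n) := fun n => rfl
  set δ₀ : ℝ := max (dist x₀ (A x₀ y₀)) (dist y₀ (A y₀ x₀)) with hδ₀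
  have hδ₀0 : (0:ℝ) ≤ δ₀ := le_trans dist_nonneg (le_max_left _ _)
  have key : ∀ n, xseq n ≤ xseq (n + 1) ∧ yseq (n + 1) ≤ yseq n ∧
      max (dist (xseq n) (xseq (n + 1))) (dist (yseq n) (yseq (n + 1))) ≤ φ^[n] δ₀ := by
    intro n
    have h := siter_key A hmm φ hφ_mono hcontr x₀ y₀ (A x₀ y₀) (A y₀ x₀) hx₀ hy₀ n
    rw [siter_shift, siter_shift] at h
    exact h
  have hxmono : Monotone xseq := monotone_nat_of_le_succ fun n => (key n).1
  have hyanti : Antitone yseq := antitone_nat_of_succ_le fun n => (key n).2.1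
  -- Cauchy
  have hcauchy : ∀ ε : ℝ, 0 < ε → ∃ N, ∀ m, N ≤ m →
      max (dist (xseq N) (xseq m)) (dist (yseq N) (yseq m)) ≤ ε := by
    intro ε hε
    have hφε : φ ε < ε := hφ_lt ε hε
    obtain ⟨N, hN⟩ := (Metric.tendsto_atTop.mp (hφ_iter δ₀ hδ₀0)) (ε - φ ε) (by linarith)
    refine ⟨N, ?_⟩
    intro m hm
    induction m, hm using Nat.le_induction with
    | base => simp [hε.le]
    | succ m hm ih =>
      have hδN : max (dist (xseq N) (xseq (N + 1))) (dist (yseq N) (yseq (N + 1)))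
          ≤ φ^[N] δ₀ := (key N).2.2
      have hφN : φ^[N] δ₀ < ε - φ ε := by
        have := hN N le_rfl
        rw [Real.dist_eq, abs_sub_lt_iff] at this
        linarith [this.1]
      have hMε : max (dist (xseq N) (xseq m)) (dist (yseq N) (yseq m)) ≤ ε := ih
      have hM0 : (0:ℝ) ≤ max (dist (xseq N) (xseq m)) (dist (yseq N) (yseq m)) :=
        le_trans dist_nonneg (le_max_left _ _)
      have hφM : φ (max (dist (xseq N) (xseq m)) (dist (yseq N) (yseq m))) ≤ φ ε :=
        hφ_mono _ _ hM0 hMε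
      have hx1 : dist (xseq (N + 1)) (xseq (m + 1)) ≤ φ ε := by
        rw [hstepx, hstepx]
        exact le_trans (hcontr _ _ _ _ (hxmono hm) (hyanti hm)) hφM
      have hy1 : dist (yseq (N + 1)) (yseq (m + 1)) ≤ φ ε := by
        rw [hstepy, hstepy, dist_comm]
        have h := hcontr (yseq m) (xseq m) (yseq N) (xseq N) (hyanti hm) (hxmono hm)
        rw [dist_comm (yseq m), dist_comm (xseq m), max_comm] at h
        exact le_trans h hφM
      refine max_le ?_ ?_
      · calc dist (xseq N) (xseq (m + 1))
            ≤ dist (xseq N) (xseq (N + 1)) + dist (xseq (N + 1)) (xseq (m + 1)) :=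
              dist_triangle _ _ _
          _ ≤ φ^[N] δ₀ + φ ε := add_le_add (le_trans (le_max_left _ _) hδN) hx1
          _ ≤ ε := by linarith
      · calc dist (yseq N) (yseq (m + 1))
            ≤ dist (yseq N) (yseq (N + 1)) + dist (yseq (N + 1)) (yseq (m + 1)) :=
              dist_triangle _ _ _
          _ ≤ φ^[N] δ₀ + φ ε := add_le_add (le_trans (le_max_right _ _) hδN) hy1
          _ ≤ ε := by linarith
  have hCx : CauchySeq xseq := by
    rw [Metric.cauchySeq_iff']
    intro ε hε
    obtain ⟨N, hN⟩ := hcauchy (ε / 2) (by linarith)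
    refine ⟨N, fun n hn => ?_⟩
    have := le_trans (le_max_left _ _) (hN n hn)
    rw [dist_comm] at this
    linarith
  have hCy : CauchySeq yseq := by
    rw [Metric.cauchySeq_iff']
    intro ε hε
    obtain ⟨N, hN⟩ := hcauchy (ε / 2) (by linarith)
    refine ⟨N, fun n hn => ?_⟩
    have := le_trans (le_max_right _ _) (hN n hn)
    rw [dist_comm] at this
    linarith
  obtain ⟨xs, hxs⟩ := cauchySeq_tendsto_of_complete hCx
  obtain ⟨ys, hys⟩ := cauchySeq_tendsto_of_complete hCy
  -- fixed point property
  have hAxy : A xs ys = xs := by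
    have h1 : Tendsto (fun n => A (xseq n) (yseq n)) atTop (𝓝 (A xs ys)) :=
      (hcont.tendsto (xs, ys)).comp (hxs.prodMk_nhds hys)
    have h2 : Tendsto (fun n => A (xseq n) (yseq n)) atTop (𝓝 xs) := by
      have : (fun n => A (xseq n) (yseq n)) = fun n => xseq (n + 1) := by
        funext n; exact (hstepx n).symm
      rw [this]
      exact hxs.comp (tendsto_add_atTop_nat 1)
    exact tendsto_nhds_unique h1 h2
  have hAyx : A ys xs = ys := by
    have h1 : Tendsto (fun n => A (yseq n) (xseq n)) atTop (𝓝 (A ys xs)) :=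
      (hcont.tendsto (ys, xs)).comp (hys.prodMk_nhds hxs)
    have h2 : Tendsto (fun n => A (yseq n) (xseq n)) atTop (𝓝 ys) := by
      have : (fun n => A (yseq n) (xseq n)) = fun n => yseq (n + 1) := by
        funext n; exact (hstepy n).symm
      rw [this]
      exact hys.comp (tendsto_add_atTop_nat 1)
    exact tendsto_nhds_unique h1 h2
  -- xs = ys
  have hxy : xs = ys := by
    obtain ⟨⟨l, hl1, hl2⟩, ⟨u, hu1, hu2⟩⟩ := hbi xs ys
    have k1 := fun n => (siter_key A hmm φ hφ_mono hcontr l u xs ys hl1 hu2 n).2.2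
    have k2 := fun n => (siter_key A hmm φ hφ_mono hcontr l u ys xs hl2 hu1 n).2.2
    have f1 : ∀ n, siter A n xs ys = xs := fun n => (siter_fixed A xs ys hAxy hAyx n).1
    have f2 : ∀ n, siter A n ys xs = ys := fun n => (siter_fixed A ys xs hAyx hAxy n).1
    have hbound : ∀ n, dist xs ys ≤
        φ^[n] (max (dist l xs) (dist u ys)) + φ^[n] (max (dist l ys) (dist u xs)) := by
      intro n
      have a1 : dist (siter A n l u) xs ≤ φ^[n] (max (dist l xs) (dist u ys)) := by
        have := le_trans (le_max_left _ _) (k1 n)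
        rwa [f1 n] at this
      have a2 : dist (siter A n l u) ys ≤ φ^[n] (max (dist l ys) (dist u xs)) := by
        have := le_trans (le_max_left _ _) (k2 n)
        rwa [f2 n] at this
      calc dist xs ys ≤ dist xs (siter A n l u) + dist (siter A n l u) ys :=
            dist_triangle _ _ _
        _ ≤ _ := by rw [dist_comm xs]; exact add_le_add a1 a2
    have htend : Tendsto (fun n => φ^[n] (max (dist l xs) (dist u ys)) +
        φ^[n] (max (dist l ys) (dist u xs))) atTop (𝓝 0) := by
      have := (hφ_iter _ (le_trans dist_nonneg (le_max_left (dist l xs) (dist u ys)))).add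
        (hφ_iter _ (le_trans dist_nonneg (le_max_left (dist l ys) (dist u xs))))
      simpa using this
    have : dist xs ys ≤ 0 := ge_of_tendsto htend (Eventually.of_forall hbound)
    exact dist_le_zero.mp this
  have hAfix : A xs xs = xs := by rw [← hxy] at hAxy; exact hAxy
  -- convergence for all starting points
  have conv : ∀ x y : X, Tendsto (fun n => siter A n x y) atTop (𝓝 xs) := by
    intro x y
    obtain ⟨⟨l1, hl1x, hl1y⟩, ⟨u1, hu1x, hu1y⟩⟩ := hbi x y
    obtain ⟨⟨l, hll1, hlxs⟩, _⟩ := hbi l1 xs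
    obtain ⟨_, ⟨u, huu1, huxs⟩⟩ := hbi u1 xs
    have hlx : l ≤ x := le_trans hll1 hl1x
    have hly : l ≤ y := le_trans hll1 hl1y
    have hxu : x ≤ u := le_trans hu1x huu1
    have hyu : y ≤ u := le_trans hu1y huu1
    have k1 := fun n => (siter_key A hmm φ hφ_mono hcontr l u x y hlx hyu n).2.2
    have k2 := fun n => (siter_key A hmm φ hφ_mono hcontr l u xs xs hlxs huxs n).2.2
    have fx : ∀ n, siter A n xs xs = xs := fun n => (siter_fixed A xs xs hAfix hAfix n).1
    have hbound : ∀ n, dist (siter A n x y) xs ≤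
        φ^[n] (max (dist l x) (dist u y)) + φ^[n] (max (dist l xs) (dist u xs)) := by
      intro n
      have a1 : dist (siter A n l u) (siter A n x y) ≤
          φ^[n] (max (dist l x) (dist u y)) := le_trans (le_max_left _ _) (k1 n)
      have a2 : dist (siter A n l u) xs ≤ φ^[n] (max (dist l xs) (dist u xs)) := by
        have := le_trans (le_max_left _ _) (k2 n)
        rwa [fx n] at this
      calc dist (siter A n x y) xs
          ≤ dist (siter A n x y) (siter A n l u) + dist (siter A n l u) xs :=
            dist_triangle _ _ _
        _ ≤ _ := by rw [dist_comm (siter A n x y)]; exact add_le_add a1 a2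
    rw [tendsto_iff_dist_tendsto_zero]
    apply squeeze_zero (fun n => dist_nonneg) hbound
    have := (hφ_iter _ (le_trans dist_nonneg (le_max_left (dist l x) (dist u y)))).add
      (hφ_iter _ (le_trans dist_nonneg (le_max_left (dist l xs) (dist u xs))))
    simpa using this
  refine ⟨xs, hAfix, ?_, conv⟩
  rintro x y ⟨h1, h2⟩
  have fx : ∀ n, siter A n x y = x := fun n => (siter_fixed A x y h1 h2 n).1
  have fy : ∀ n, siter A n y x = y := fun n => (siter_fixed A y x h2 h1 n).1
  constructor
  · have h := conv x y
    rw [show (fun n => siter A n x y) = fun _ => x from funext fx] at h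
    exact tendsto_nhds_unique tendsto_const_nhds h
  · have h := conv y x
    rw [show (fun n => siter A n y x) = fun _ => y from funext fy] at h
    exact tendsto_nhds_unique tendsto_const_nhds h
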